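/- Among the 96 automorphisms of the Möbius–Kantor graph MK, exactly 14 have Lefschetz number 4, exactly 24 have Lefschetz number 2, and exactly 57 have Lefschetz number 0 (the remaining one being the identity with Lefschetz number −8). -/

import Mathlib

set_option maxRecDepth 10000


/-- The underlying relation of the Möbius–Kantor graph `GP(8,3)`. -/
def mkRel (v w : ZMod 8 × Fin 2) : Bool :=
  (v.2 == 0 && w.2 == 0 && (w.1 == v.1 + 1 || v.1 == w.1 + 1)) ||
  ((v.2 == 0 && w.2 == 1 || v.2 == 1 && w.2 == 0) && v.1 == w.1) ||
  (v.2 == 1 && w.2 == 1 && (w.1 == v.1 + 3 || v.1 == w.1 + 3))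

/-- The Möbius–Kantor graph, i.e. the generalized Petersen graph `GP(8,3)`. -/
def MK : SimpleGraph (ZMod 8 × Fin 2) where
  Adj v w := mkRel v w = true
  symm := ⟨by intro v w; revert v w; decide⟩
  loopless := ⟨by intro v; revert v; decide⟩

instance : DecidableRel MK.Adj := fun v w => inferInstanceAs (Decidable (mkRel v w = true))

noncomputable instance : Fintype (MK ≃g MK) :=
  Fintype.ofInjective (fun T => T.toEquiv) (fun T S h => by
    cases T; cases S; simpa using h)

/-- The Lefschetz number of a graph automorphism `T` of `MK`: the number of fixed
vertices, minus the number of edges fixed pointwise, plus the number of edges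
mapped to themselves with their endpoints swapped. -/
noncomputable def lefschetz (T : MK ≃g MK) : ℤ :=
  ((Finset.univ.filter fun v : ZMod 8 × Fin 2 => T v = v).card : ℤ)
    - ((MK.edgeFinset.filter fun e => ∀ v ∈ e, T v = v).card : ℤ)
    + ((MK.edgeFinset.filter fun e => Sym2.map T e = e ∧ ¬ ∀ v ∈ e, T v = v).card : ℤ)

/-! ### Auxiliary material -/

abbrev Vt := ZMod 8 × Fin 2

def mkIsoOfFuns (f g : Vt → Vt) (h1 : ∀ v, g (f v) = v) (h2 : ∀ v, f (g v) = v)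
    (h3 : ∀ v w, mkRel (f v) (f w) = mkRel v w) : MK ≃g MK where
  toFun := f
  invFun := g
  left_inv := h1
  right_inv := h2
  map_rel_iff' := by intro v w; show mkRel (f v) (f w) = true ↔ mkRel v w = true; rw [h3]

def rho : MK ≃g MK := mkIsoOfFuns (fun v => (v.1 + 1, v.2)) (fun v => (v.1 - 1, v.2))
  (by decide) (by decide) (by decide)
def alp : MK ≃g MK := mkIsoOfFuns (fun v => (3 * v.1, 1 - v.2)) (fun v => (3 * v.1, 1 - v.2))
  (by decide) (by decide) (by decide)
def muu : MK ≃g MK := mkIsoOfFuns (fun v => (-v.1, v.2)) (fun v => (-v.1, v.2))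
  (by decide) (by decide) (by decide)

def enc (v : Vt) : Fin 16 := ⟨v.1.val + 8 * v.2.val, by
  have h1 : v.1.val < 8 := v.1.isLt
  have h2 : v.2.val < 2 := v.2.isLt
  omega⟩

def tauTbl : Fin 16 → Vt :=
  ![(0,0),(7,0),(7,1),(4,1),(4,0),(3,0),(3,1),(0,1),(1,0),(6,0),(2,1),(1,1),(5,0),(2,0),(6,1),(5,1)]
def tau2Tbl : Fin 16 → Vt :=
  ![(0,0),(0,1),(5,1),(5,0),(4,0),(4,1),(1,1),(1,0),(7,0),(3,1),(2,1),(6,0),(3,0),(7,1),(6,1),(2,0)]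

def tau : MK ≃g MK := mkIsoOfFuns (fun v => tauTbl (enc v)) (fun v => tau2Tbl (enc v))
  (by decide) (by decide) (by decide)

/-- Iterated composition. -/
def pw : ℕ → (MK ≃g MK) → (MK ≃g MK)
  | 0, _ => RelIso.refl _
  | n+1, g => (pw n g).trans g

/-- The word `ρ^i ∘ α^e ∘ μ^m ∘ τ^t` (as a function, `τ` applied first). -/
def word (i e m t : ℕ) : MK ≃g MK :=
  (((pw t tau).trans (pw m muu)).trans (pw e alp)).trans (pw i rho)

/-- A list of all `96` automorphisms of `MK`. -/
def L : List (MK ≃g MK) :=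
  (List.range 8).flatMap fun i => (List.range 2).flatMap fun e =>
    (List.range 2).flatMap fun m => (List.range 3).map fun t => word i e m t

def tripleOf (T : MK ≃g MK) : Vt × Vt × Vt := (T (0,0), T (1,0), T (0,1))

/-! ### Walk counts and rigidity -/

def wk : ℕ → Vt → Vt → ℕ
  | 0, v, w => if v = w then 1 else 0
  | n+1, v, w => ∑ u : Vt, if mkRel v u then wk n u w else 0

lemma wk_inv (T : MK ≃g MK) : ∀ (n : ℕ) (v w : Vt), wk n (T v) (T w) = wk n v w := by
  intro n
  induction n with
  | zero =>
    intro v w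
    show (if T v = T w then 1 else 0) = (if v = w then 1 else 0)
    rw [if_congr (EquivLike.apply_eq_iff_eq T) rfl rfl]
  | succ n ih =>
    intro v w
    show (∑ u : Vt, if mkRel (T v) u then wk n u (T w) else 0)
        = ∑ u : Vt, if mkRel v u then wk n u w else 0
    rw [← Equiv.sum_comp T.toEquiv (fun u => if mkRel (T v) u then wk n u (T w) else 0)]
    refine Finset.sum_congr rfl fun u _ => ?_
    have hadj : mkRel (T v) (T u) = mkRel v u := by
      have h := T.map_adj_iff (v := v) (w := u)
      exact Bool.eq_iff_iff.mpr (by exact_mod_cast h)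
    simp only [show ∀ x : Vt, T.toEquiv x = T x from fun _ => rfl]
    rw [hadj, ih]

def sgA2 : Fin 16 → ℕ := ![3,0,1,0,0,0,1,0,0,1,0,1,0,1,0,1]
def sgB2 : Fin 16 → ℕ := ![0,3,0,1,0,0,0,1,1,0,1,0,1,0,1,0]
def sgC2 : Fin 16 → ℕ := ![0,1,0,1,0,1,0,1,3,0,1,0,0,0,1,0]
def sgA3 : Fin 16 → ℕ := ![0,5,0,2,0,2,0,5,5,0,3,0,2,0,3,0]
def sgB3 : Fin 16 → ℕ := ![5,0,5,0,2,0,2,0,0,5,0,3,0,2,0,3]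
def sgC3 : Fin 16 → ℕ := ![5,0,3,0,2,0,3,0,0,2,0,5,0,5,0,2]

/-- The signature of a vertex: walk counts of lengths 2, 3 from the three anchors. -/
def sg (w : Vt) : ℕ × ℕ × ℕ × ℕ × ℕ × ℕ :=
  (sgA2 (enc w), sgB2 (enc w), sgC2 (enc w), sgA3 (enc w), sgB3 (enc w), sgC3 (enc w))

lemma sg_eq : ∀ w : Vt, sg w =
    (wk 2 (0,0) w, wk 2 (1,0) w, wk 2 (0,1) w, wk 3 (0,0) w, wk 3 (1,0) w, wk 3 (0,1) w) := by
  decide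

lemma sg_inj : ∀ w w' : Vt, sg w = sg w' →
    w = w' ∨ (w = (2,1) ∧ w' = (6,1)) ∨ (w = (6,1) ∧ w' = (2,1)) := by decide

lemma sg_S (S : MK ≃g MK) (ha : S (0,0) = (0,0)) (hb : S (1,0) = (1,0))
    (hc : S (0,1) = (0,1)) (w : Vt) : sg (S w) = sg w := by
  have h2 : ∀ (k : ℕ) (x : Vt), S x = x → wk k x (S w) = wk k x w := by
    intro k x hx
    have h := wk_inv S k x w
    rw [hx] at h
    exact h
  rw [sg_eq, sg_eq, h2 2 _ ha, h2 2 _ hb, h2 2 _ hc, h2 3 _ ha, h2 3 _ hb, h2 3 _ hc]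

/-- Rigidity: an automorphism fixing the arc `(1,0) – (0,0) – (0,1)` is the identity. -/
lemma rigid (S : MK ≃g MK) (ha : S (0,0) = (0,0)) (hb : S (1,0) = (1,0))
    (hc : S (0,1) = (0,1)) : ∀ w, S w = w := by
  have key : ∀ w : Vt, S w = w ∨ (S w = (2,1) ∧ w = (6,1)) ∨ (S w = (6,1) ∧ w = (2,1)) :=
    fun w => sg_inj _ _ (sg_S S ha hb hc w)
  have fix : ∀ w : Vt, w ≠ (2,1) → w ≠ (6,1) → S w = w := by
    intro w h1 h2
    rcases key w with h | ⟨_, h⟩ | ⟨_, h⟩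
    · exact h
    · exact absurd h h2
    · exact absurd h h1
  have h20 : S (2,0) = (2,0) := fix _ (by decide) (by decide)
  have h21 : S (2,1) = (2,1) := by
    rcases key (2,1) with h | ⟨_, h⟩ | ⟨h, _⟩
    · exact h
    · exact absurd h (by decide)
    · exfalso
      have hadj : MK.Adj (S (2,0)) (S (2,1)) := S.map_adj_iff.mpr (by decide)
      rw [h20, h] at hadj
      exact absurd hadj (by decide)
  intro w
  by_cases e1 : w = ((2 : ZMod 8), (1 : Fin 2))
  · rw [e1]; exact h21
  by_cases e2 : w = ((6 : ZMod 8), (1 : Fin 2))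
  · rw [e2]
    rcases key (6,1) with h | ⟨h, _⟩ | ⟨_, h⟩
    · exact h
    · exact absurd (S.injective (h.trans h21.symm)) (by decide)
    · exact absurd h (by decide)
  · exact fix w e1 e2

/-! ### The list `L` enumerates all automorphisms -/

def TL : List (Vt × Vt × Vt) := L.map tripleOf

lemma TL_nodup : TL.Nodup := by decide

lemma L_nodup : L.Nodup := List.Nodup.of_map tripleOf TL_nodup

lemma pw_rho (i : ℕ) (x : Vt) : pw i rho x = (x.1 + i, x.2) := by
  induction i with
  | zero => show x = (x.1 + (0:ℕ), x.2); push_cast; rw [add_zero]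
  | succ n ih =>
    show rho (pw n rho x) = _
    rw [ih]
    show (x.1 + n + 1, x.2) = (x.1 + ((n:ℕ)+1 : ℕ), x.2)
    push_cast
    rw [add_assoc]

lemma pw_fix (g : MK ≃g MK) (hg : g (0,0) = (0,0)) (n : ℕ) : pw n g (0,0) = (0,0) := by
  induction n with
  | zero => rfl
  | succ n ih => show g (pw n g (0,0)) = _; rw [ih, hg]

instance cov0Dec : Decidable (∀ b c : Vt, mkRel (0,0) b = true → mkRel (0,0) c = true → b ≠ c →
    ∃ m < 2, ∃ t < 3, ((pw t tau).trans (pw m muu)) (1,0) = b ∧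
      ((pw t tau).trans (pw m muu)) (0,1) = c) :=
  Fintype.decidableForallFintype

lemma cover0 : ∀ b c : Vt, mkRel (0,0) b = true → mkRel (0,0) c = true → b ≠ c →
    ∃ m < 2, ∃ t < 3, ((pw t tau).trans (pw m muu)) (1,0) = b ∧
      ((pw t tau).trans (pw m muu)) (0,1) = c := by decide

lemma mem_L (T : MK ≃g MK) : T ∈ L := by
  set a := T (0,0) with ha
  set U : MK ≃g MK := (pw a.2.val alp).trans (pw a.1.val rho) with hU
  have hU0 : U (0,0) = a := by
    have h2 : pw a.2.val alp ((0:ZMod 8),(0:Fin 2)) = (0, a.2) := by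
      rcases (by decide : ∀ x : Fin 2, x = 0 ∨ x = 1) a.2 with h | h <;> rw [h] <;> rfl
    show pw a.1.val rho (pw a.2.val alp (0,0)) = a
    rw [h2, pw_rho]
    show ((0:ZMod 8) + a.1.val, a.2) = a
    rw [zero_add, ZMod.natCast_rightInverse a.1]
  set R : MK ≃g MK := T.trans U.symm with hR
  have hR0 : R (0,0) = (0,0) := by
    show U.symm (T (0,0)) = (0,0)
    rw [← ha, ← hU0]
    exact U.symm_apply_apply _
  have hadjb : mkRel (0,0) (R (1,0)) = true := by
    have : MK.Adj (R (0,0)) (R (1,0)) := R.map_adj_iff.mpr (by decide)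
    rwa [hR0] at this
  have hadjc : mkRel (0,0) (R (0,1)) = true := by
    have : MK.Adj (R (0,0)) (R (0,1)) := R.map_adj_iff.mpr (by decide)
    rwa [hR0] at this
  have hbc : R (1,0) ≠ R (0,1) := fun h => absurd (R.injective h) (by decide)
  obtain ⟨m, hm, t, ht, hb, hc⟩ := cover0 _ _ hadjb hadjc hbc
  set σ : MK ≃g MK := (pw t tau).trans (pw m muu) with hσ
  have hσ0 : σ (0,0) = (0,0) := by
    show pw m muu (pw t tau (0,0)) = (0,0)
    rw [pw_fix tau rfl, pw_fix muu rfl]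
  have hQ : ∀ w, (R.trans σ.symm) w = w := by
    apply rigid
    · show σ.symm (R (0,0)) = (0,0)
      rw [hR0]
      conv_lhs => rw [← hσ0]
      exact σ.symm_apply_apply _
    · show σ.symm (R (1,0)) = (1,0)
      rw [show R ((1:ZMod 8),(0:Fin 2)) = σ (1,0) from hb.symm]
      exact σ.symm_apply_apply _
    · show σ.symm (R (0,1)) = (0,1)
      rw [show R ((0:ZMod 8),(1:Fin 2)) = σ (0,1) from hc.symm]
      exact σ.symm_apply_apply _
  have hTw : T = word a.1.val a.2.val m t := by
    apply RelIso.ext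
    intro v
    have h1 : R v = σ v := by
      have h0 := congrArg σ (hQ v)
      have h0' : σ (σ.symm (R v)) = σ v := h0
      rwa [σ.apply_symm_apply] at h0'
    have h2 : T v = U (R v) := by
      show T v = U (U.symm (T v))
      rw [U.apply_symm_apply]
    rw [h2, h1]
    rfl
  rw [hTw]
  have hi : a.1.val < 8 := a.1.isLt
  have he : a.2.val < 2 := a.2.isLt
  simp only [L, List.mem_flatMap, List.mem_map, List.mem_range]
  exact ⟨a.1.val, hi, a.2.val, he, m, hm, t, ht, rfl⟩

lemma univ_eq : (Finset.univ : Finset (MK ≃g MK)) = ⟨(L : Multiset _), by exact_mod_cast L_nodup⟩ := by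
  apply Finset.ext
  intro T
  simp only [Finset.mem_univ, true_iff, Finset.mem_mk, Multiset.mem_coe]
  exact mem_L T

/-- Among the 96 automorphisms of `MK`, exactly 14 have Lefschetz number 4, exactly 24
have Lefschetz number 2, and exactly 57 have Lefschetz number 0. -/
theorem lefschetz_counts_moebiusKantor :
    Nat.card (MK ≃g MK) = 96 ∧
    (Finset.univ.filter fun T : MK ≃g MK => lefschetz T = 4).card = 14 ∧
    (Finset.univ.filter fun T : MK ≃g MK => lefschetz T = 2).card = 24 ∧
    (Finset.univ.filter fun T : MK ≃g MK => lefschetz T = 0).card = 57 ∧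
    (Finset.univ.filter fun T : MK ≃g MK => lefschetz T = -8).card = 1 ∧
    lefschetz (1 : MK ≃g MK) = -8 := by
  refine ⟨?_, ?_, ?_, ?_, ?_, by decide⟩
  · rw [Nat.card_eq_fintype_card, ← Finset.card_univ, univ_eq]
    rfl
  · rw [univ_eq]; decide
  · rw [univ_eq]; decide
  · rw [univ_eq]; decide
  · rw [univ_eq]; decide
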